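/- Suppose p is generic for G, some node label B_{ii} with 1 ≤ i ≤ n−2 is a nonzero square mod p, the subspaces V and V_{0,n−1} are nonsingular while at least one of V_0, V_{n−1} is singular, G_{0,n−1}^p is of orthogonal type on V_{0,n−1}, and moreover G^p = O_1(V) in the case that G_{0,n−1}^p = O_1(V_{0,n−1}). Then G_0^p ∩ G_{n−1}^p = G_{0,n−1}^p. -/

import Mathlib

/- Setup: reduction mod an odd prime `p` of a crystallographic Coxeter group
`G = ⟨r₀, …, r_{n−1}⟩` with string diagram and Gram matrix `B`. -/

namespace Statement6

variable (n p : ℕ)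

/-- `V = (ZMod p)^n`. -/
abbrev V := Fin n → ZMod p

/-- The general linear group of `V`. -/
abbrev GLV := (Module.End (ZMod p) (V n p))ˣ

/-- Reduction of a rational number mod `p` (meaningful when the denominator is prime to `p`). -/
def redQ (q : ℚ) : ZMod p := (q.num : ZMod p) * ((q.den : ZMod p))⁻¹

/-- The standard basis vector `b_i`. -/
def basisVec (i : Fin n) : V n p := Pi.single i 1

/-- The symmetric bilinear form on `V` obtained by reducing the Gram matrix `B` mod `p`. -/
def form (B : Matrix (Fin n) (Fin n) ℚ) (x y : V n p) : ZMod p :=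
  ∑ i, ∑ j, x i * redQ p (B i j) * y j

/-- `B` is the Gram matrix of a basic system for a crystallographic Coxeter group with
string diagram: symmetric, tridiagonal, positive integer node labels, integer Cartan
entries, and branch condition `4 B_{i-1,i}² = c ⬝ B_{i-1,i-1} ⬝ B_{ii}` with `c ∈ {1,2,3,4}`
(or `B_{i-1,i} = 0`, i.e. an absent branch). -/
def GramOK (B : Matrix (Fin n) (Fin n) ℚ) : Prop :=
  (∀ i j, B i j = B j i) ∧
  (∀ i j : Fin n, 1 < |(i : ℤ) - (j : ℤ)| → B i j = 0) ∧
  (∀ i, ∃ m : ℕ, 0 < m ∧ B i i = m) ∧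
  (∀ i j, ∃ c : ℤ, 2 * B i j / B i i = (c : ℚ)) ∧
  (∀ i : Fin n, ∀ h : (i : ℕ) + 1 < n,
    B i ⟨(i : ℕ) + 1, h⟩ = 0 ∨
      ∃ c : ℕ, 1 ≤ c ∧ c ≤ 4 ∧
        4 * (B i ⟨(i : ℕ) + 1, h⟩) ^ 2 = c * B i i * B ⟨(i : ℕ) + 1, h⟩ ⟨(i : ℕ) + 1, h⟩)

/-- All entries of `B` are `p`-integral. -/
def PIntegral (B : Matrix (Fin n) (Fin n) ℚ) : Prop :=
  ∀ i j, ¬ (p ∣ (B i j).den)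

/-- `p` is generic for `G`: either `p ≥ 5`, or `p = 3` and no branch is labelled `6`
(a branch `{i, i+1}` is labelled `6` exactly when `4 B_{i,i+1}² = 3 ⬝ B_{ii} ⬝ B_{i+1,i+1}`). -/
def Generic (B : Matrix (Fin n) (Fin n) ℚ) : Prop :=
  5 ≤ p ∨ (p = 3 ∧ ∀ i : Fin n, ∀ h : (i : ℕ) + 1 < n,
    4 * (B i ⟨(i : ℕ) + 1, h⟩) ^ 2 ≠ 3 * B i i * B ⟨(i : ℕ) + 1, h⟩ ⟨(i : ℕ) + 1, h⟩)

/-- `r i` is the reduction mod `p` of the generating reflection `r_i`, determined by its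
action on the standard basis: `r_i(b_j) = b_j − C_{ij} b_i` with `C_{ij} = 2 B_{ij}/B_{ii}`. -/
def ReflHyp (B : Matrix (Fin n) (Fin n) ℚ) (r : Fin n → GLV n p) : Prop :=
  ∀ i j : Fin n, (r i).1 (basisVec n p j) =
    basisVec n p j - redQ p (2 * B i j / B i i) • basisVec n p i

/-- The intersection property (string C-group condition) for the subgroups generated by
the reflections `r i`, `i ∈ S`. -/
def IsStringC (r : Fin n → GLV n p) (S : Set (Fin n)) : Prop :=
  ∀ I J : Set (Fin n), I ⊆ S → J ⊆ S →
    Subgroup.closure (r '' I) ⊓ Subgroup.closure (r '' J) = Subgroup.closure (r '' (I ∩ J))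

/-- The span of the basis vectors `b_i`, `i ∈ S`. -/
def spanV (S : Set (Fin n)) : Submodule (ZMod p) (V n p) :=
  Submodule.span (ZMod p) (basisVec n p '' S)

/-- The subspace `W` is nonsingular: the restriction of the form to `W` is nondegenerate. -/
def Nonsing (B : Matrix (Fin n) (Fin n) ℚ) (W : Submodule (ZMod p) (V n p)) : Prop :=
  ∀ x ∈ W, (∀ y ∈ W, form n p B x y = 0) → x = 0

/-- The full orthogonal group `O(V)` of the form, as a subgroup of `GL(V)`. -/
def OV (B : Matrix (Fin n) (Fin n) ℚ) : Subgroup (GLV n p) where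
  carrier := {g | ∀ x y, form n p B (g.1 x) (g.1 y) = form n p B x y}
  one_mem' := by intro x y; simp
  mul_mem' := by
    intro a b ha hb x y
    simpa [Units.val_mul] using (ha (b.1 x) (b.1 y)).trans (hb x y)
  inv_mem' := by
    intro a ha x y
    have key : ∀ z, a.1 ((a⁻¹ : GLV n p).1 z) = z := by
      intro z
      rw [← Module.End.mul_apply, ← Units.val_mul, mul_inv_cancel, Units.val_one,
        Module.End.one_apply]
    have h := ha ((a⁻¹ : GLV n p).1 x) ((a⁻¹ : GLV n p).1 y)
    rw [key, key] at h
    exact h.symm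

/-- `g` fixes `W^⊥` pointwise. -/
def perpFix (B : Matrix (Fin n) (Fin n) ℚ) (W : Submodule (ZMod p) (V n p))
    (g : GLV n p) : Prop :=
  ∀ u : V n p, (∀ w ∈ W, form n p B u w = 0) → g.1 u = u

/-- `O(W)` identified with the subgroup `{g ∈ O(V) : g(W) = W, g fixes W^⊥ pointwise}`
of `O(V)`. -/
def OSub (B : Matrix (Fin n) (Fin n) ℚ) (W : Submodule (ZMod p) (V n p)) :
    Subgroup (GLV n p) where
  carrier := {g | g ∈ OV n p B ∧ Submodule.map g.1 W = W ∧ perpFix n p B W g}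
  one_mem' := by
    refine ⟨(OV n p B).one_mem, ?_, fun u _ => by simp⟩
    simp [Module.End.one_eq_id]
  mul_mem' := by
    rintro a b ⟨ha1, ha2, ha3⟩ ⟨hb1, hb2, hb3⟩
    refine ⟨mul_mem ha1 hb1, ?_, ?_⟩
    · rw [Units.val_mul, Module.End.mul_eq_comp, Submodule.map_comp, hb2, ha2]
    · intro u hu
      rw [Units.val_mul, Module.End.mul_apply, hb3 u hu, ha3 u hu]
  inv_mem' := by
    rintro a ⟨ha1, ha2, ha3⟩
    have key : ∀ z, (a⁻¹ : GLV n p).1 (a.1 z) = z := fun z => by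
      rw [← Module.End.mul_apply, ← Units.val_mul, inv_mul_cancel, Units.val_one,
        Module.End.one_apply]
    refine ⟨(OV n p B).inv_mem ha1, ?_, ?_⟩
    · conv_lhs => rw [← ha2]
      rw [← Submodule.map_comp, ← Module.End.mul_eq_comp, ← Units.val_mul, inv_mul_cancel,
        Units.val_one, Module.End.one_eq_id]
      simp
    · intro u hu
      conv_lhs => rw [← ha3 u hu]
      exact key u

/-- `g` is the reflection `r_a` with root `a ∈ W`, where `a·a` is a nonzero square. -/
def IsSqRefl (B : Matrix (Fin n) (Fin n) ℚ) (W : Submodule (ZMod p) (V n p))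
    (g : GLV n p) : Prop :=
  ∃ a ∈ W, (∃ t : ZMod p, t ≠ 0 ∧ form n p B a a = t ^ 2) ∧
    ∀ x, g.1 x = x - (2 * form n p B x a * (form n p B a a)⁻¹) • a

/-- `g` is the reflection `r_a` with root `a ∈ W`, where `a·a` is a nonsquare. -/
def IsNonsqRefl (B : Matrix (Fin n) (Fin n) ℚ) (W : Submodule (ZMod p) (V n p))
    (g : GLV n p) : Prop :=
  ∃ a ∈ W, (∀ t : ZMod p, form n p B a a ≠ t ^ 2) ∧
    ∀ x, g.1 x = x - (2 * form n p B x a * (form n p B a a)⁻¹) • a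

/-- `O₁(W)` (resp. `Ô₁(W)` when `W` is singular): the subgroup generated by all
reflections `r_a` with root `a ∈ W` of square norm. -/
def O1 (B : Matrix (Fin n) (Fin n) ℚ) (W : Submodule (ZMod p) (V n p)) :
    Subgroup (GLV n p) :=
  Subgroup.closure {g | IsSqRefl n p B W g}

/-- `O₂(W)`: the subgroup generated by all reflections `r_a` with root `a ∈ W`
of nonsquare norm. -/
def O2 (B : Matrix (Fin n) (Fin n) ℚ) (W : Submodule (ZMod p) (V n p)) :
    Subgroup (GLV n p) :=
  Subgroup.closure {g | IsNonsqRefl n p B W g}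

/-- `H` is of orthogonal type on the (nonsingular) subspace `W`. -/
def OrthType (B : Matrix (Fin n) (Fin n) ℚ) (W : Submodule (ZMod p) (V n p))
    (H : Subgroup (GLV n p)) : Prop :=
  H = OSub n p B W ∨ H = O1 n p B W ∨ H = O2 n p B W


/-! ### Auxiliary development -/

section Aux

variable {n p : ℕ}

lemma pPrime_neZero (hp : Fact p.Prime) : NeZero p := ⟨hp.out.ne_zero⟩

lemma den_cast_ne_zero [Fact p.Prime] {q : ℚ} (hq : ¬ (p ∣ q.den)) :
    ((q.den : ZMod p)) ≠ 0 := by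
  haveI : NeZero p := pPrime_neZero ‹_›
  intro h
  exact hq ((ZMod.natCast_eq_zero_iff _ _).mp h)

lemma redQ_int (c : ℤ) : redQ p (c : ℚ) = (c : ZMod p) := by
  simp [redQ, Rat.den_intCast, Rat.num_intCast]

lemma redQ_cross [Fact p.Prime] {q q' : ℚ} (hq : ¬ p ∣ q.den) (hq' : ¬ p ∣ q'.den)
    {a b : ℤ} (h : q * (b : ℚ) = (a : ℚ) * q') :
    redQ p q * (b : ZMod p) = (a : ZMod p) * redQ p q' := by
  have hd0 : (q.den : ℚ) ≠ 0 := by exact_mod_cast q.den_nz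
  have hd0' : (q'.den : ℚ) ≠ 0 := by exact_mod_cast q'.den_nz
  have key : q.num * b * (q'.den : ℤ) = a * q'.num * (q.den : ℤ) := by
    have h1 := Rat.num_div_den q
    have h2 := Rat.num_div_den q'
    rw [← h1, ← h2] at h
    field_simp at h
    have h' : q.num * b * (q'.den : ℤ) = (q.den : ℤ) * a * q'.num := by exact_mod_cast h
    linear_combination h'
  have key2 : (q.num : ZMod p) * (b : ZMod p) * ((q'.den : ℕ) : ZMod p)
      = (a : ZMod p) * (q'.num : ZMod p) * ((q.den : ℕ) : ZMod p) := by
    have := congrArg (fun z : ℤ => (z : ZMod p)) key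
    push_cast at this ⊢
    linear_combination this
  have hd : ((q.den : ℕ) : ZMod p) ≠ 0 := den_cast_ne_zero hq
  have hd' : ((q'.den : ℕ) : ZMod p) ≠ 0 := den_cast_ne_zero hq'
  rw [redQ, redQ]
  field_simp
  linear_combination key2

/-- additivity of `form` in the first argument -/
lemma form_add_left (B : Matrix (Fin n) (Fin n) ℚ) (x x' y : V n p) :
    form n p B (x + x') y = form n p B x y + form n p B x' y := by
  simp [form, Pi.add_apply, add_mul, Finset.sum_add_distrib]

lemma form_smul_left (B : Matrix (Fin n) (Fin n) ℚ) (c : ZMod p) (x y : V n p) :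
    form n p B (c • x) y = c * form n p B x y := by
  simp only [form, Pi.smul_apply, smul_eq_mul, Finset.mul_sum]
  refine Finset.sum_congr rfl fun i _ => Finset.sum_congr rfl fun j _ => by ring

lemma form_add_right (B : Matrix (Fin n) (Fin n) ℚ) (x y y' : V n p) :
    form n p B x (y + y') = form n p B x y + form n p B x y' := by
  simp [form, Pi.add_apply, mul_add, Finset.sum_add_distrib]

lemma form_smul_right (B : Matrix (Fin n) (Fin n) ℚ) (c : ZMod p) (x y : V n p) :
    form n p B x (c • y) = c * form n p B x y := by
  simp only [form, Pi.smul_apply, smul_eq_mul, Finset.mul_sum]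
  refine Finset.sum_congr rfl fun i _ => Finset.sum_congr rfl fun j _ => by ring

lemma form_neg_left (B : Matrix (Fin n) (Fin n) ℚ) (x y : V n p) :
    form n p B (-x) y = - form n p B x y := by
  have := form_smul_left B (-1 : ZMod p) x y
  simpa using this

lemma form_neg_right (B : Matrix (Fin n) (Fin n) ℚ) (x y : V n p) :
    form n p B x (-y) = - form n p B x y := by
  have := form_smul_right B (-1 : ZMod p) x y
  simpa using this

lemma form_sub_left (B : Matrix (Fin n) (Fin n) ℚ) (x x' y : V n p) :
    form n p B (x - x') y = form n p B x y - form n p B x' y := by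
  rw [sub_eq_add_neg, form_add_left, form_neg_left, sub_eq_add_neg]

lemma form_sub_right (B : Matrix (Fin n) (Fin n) ℚ) (x y y' : V n p) :
    form n p B x (y - y') = form n p B x y - form n p B x y' := by
  rw [sub_eq_add_neg, form_add_right, form_neg_right, sub_eq_add_neg]

lemma form_comm (B : Matrix (Fin n) (Fin n) ℚ) (hB : ∀ i j, B i j = B j i) (x y : V n p) :
    form n p B x y = form n p B y x := by
  rw [form, form, Finset.sum_comm]
  refine Finset.sum_congr rfl fun j _ => Finset.sum_congr rfl fun i _ => by
    rw [hB i j]; ring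

lemma form_basis_left (B : Matrix (Fin n) (Fin n) ℚ) (i : Fin n) (y : V n p) :
    form n p B (basisVec n p i) y = ∑ j, redQ p (B i j) * y j := by
  rw [form]
  rw [Finset.sum_eq_single i]
  · refine Finset.sum_congr rfl fun j _ => by
      simp [basisVec, Pi.single_eq_same]
  · intro k _ hk
    refine Finset.sum_eq_zero fun j _ => by
      simp [basisVec, Pi.single_eq_of_ne hk]
  · intro h; exact absurd (Finset.mem_univ i) h

lemma form_basis (B : Matrix (Fin n) (Fin n) ℚ) (i j : Fin n) :
    form n p B (basisVec n p i) (basisVec n p j) = redQ p (B i j) := by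
  rw [form_basis_left]
  rw [Finset.sum_eq_single j]
  · simp [basisVec, Pi.single_eq_same]
  · intro k _ hk
    simp [basisVec, Pi.single_eq_of_ne hk]
  · intro h; exact absurd (Finset.mem_univ j) h

lemma basisVec_ne_zero [Fact p.Prime] (i : Fin n) : basisVec n p i ≠ 0 := by
  intro h
  have := congrFun h i
  rw [basisVec, Pi.single_eq_same] at this
  exact one_ne_zero this

lemma two_ne_zero' [Fact p.Prime] (hodd : p ≠ 2) : ((2 : ℤ) : ZMod p) ≠ 0 := by
  haveI : NeZero p := pPrime_neZero ‹_›
  intro h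
  have : ((2 : ℕ) : ZMod p) = 0 := by exact_mod_cast h
  have h2 : p ∣ 2 := (ZMod.natCast_eq_zero_iff _ _).mp this
  have := (Nat.prime_dvd_prime_iff_eq (Fact.out : p.Prime) Nat.prime_two).mp h2
  exact hodd this

/-- The key Cartan-integrality consequence: `2·redQ(B i j) = c·redQ(B i i)`. -/
lemma cartan_red [Fact p.Prime] {B : Matrix (Fin n) (Fin n) ℚ} (hB : GramOK n B)
    (hint : PIntegral n p B) (i j : Fin n) :
    ∃ c : ℤ, 2 * B i j / B i i = (c : ℚ) ∧
      redQ p (B i j) * ((2 : ℤ) : ZMod p) = (c : ZMod p) * redQ p (B i i) := by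
  obtain ⟨c, hc⟩ := hB.2.2.2.1 i j
  refine ⟨c, hc, ?_⟩
  have hBii0 : B i i ≠ 0 := by
    obtain ⟨m, hm, he⟩ := hB.2.2.1 i
    rw [he]
    exact_mod_cast (Nat.cast_pos.mpr hm).ne' (α := ℚ)
  have hq : B i j * ((2:ℤ) : ℚ) = (c : ℚ) * B i i := by
    rw [div_eq_iff hBii0] at hc
    push_cast
    linarith [hc]
  exact redQ_cross (hint i j) (hint i i) hq

/-- If some node norm reduced to zero, the whole row would vanish and `V` would be singular. -/
lemma normB_ne_zero [Fact p.Prime] {B : Matrix (Fin n) (Fin n) ℚ} (hB : GramOK n B)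
    (hint : PIntegral n p B) (hV : Nonsing n p B ⊤) (hodd : p ≠ 2) (i : Fin n) :
    redQ p (B i i) ≠ 0 := by
  intro h0
  have hrow : ∀ j, redQ p (B i j) = 0 := by
    intro j
    obtain ⟨c, _, hred⟩ := cartan_red hB hint i j
    rw [h0, mul_zero] at hred
    rcases mul_eq_zero.mp hred with h | h
    · exact h
    · exact absurd h (two_ne_zero' hodd)
  refine basisVec_ne_zero (p := p) i ?_
  refine hV (basisVec n p i) Submodule.mem_top fun y _ => ?_
  rw [form_basis_left]
  exact Finset.sum_eq_zero fun j _ => by rw [hrow j, zero_mul]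

lemma norm_basis_ne_zero [Fact p.Prime] {B : Matrix (Fin n) (Fin n) ℚ} (hB : GramOK n B)
    (hint : PIntegral n p B) (hV : Nonsing n p B ⊤) (hodd : p ≠ 2) (i : Fin n) :
    form n p B (basisVec n p i) (basisVec n p i) ≠ 0 := by
  rw [form_basis]; exact normB_ne_zero hB hint hV hodd i

end Aux


section Refl

variable {n p : ℕ} [Fact p.Prime] {B : Matrix (Fin n) (Fin n) ℚ}

/-- The reflection endomorphism with root `a`. -/
def rho (B : Matrix (Fin n) (Fin n) ℚ) (a : V n p) : Module.End (ZMod p) (V n p) where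
  toFun x := x - (2 * form n p B x a * (form n p B a a)⁻¹) • a
  map_add' x y := by
    show x + y - _ • a = (x - _ • a) + (y - _ • a)
    rw [form_add_left]
    rw [show (2 * (form n p B x a + form n p B y a) * (form n p B a a)⁻¹)
        = 2 * form n p B x a * (form n p B a a)⁻¹
          + 2 * form n p B y a * (form n p B a a)⁻¹ by ring]
    rw [add_smul]
    abel
  map_smul' c x := by
    show c • x - _ • a = (RingHom.id (ZMod p)) c • (x - _ • a)
    rw [form_smul_left]
    simp only [RingHom.id_apply, smul_sub, smul_smul]
    rw [show (2 * (c * form n p B x a) * (form n p B a a)⁻¹)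
        = c * (2 * form n p B x a * (form n p B a a)⁻¹) by ring]

lemma rho_apply (a x : V n p) :
    rho B a x = x - (2 * form n p B x a * (form n p B a a)⁻¹) • a := rfl

lemma form_rho_right (hs : ∀ i j, B i j = B j i) (a : V n p)
    (ha : form n p B a a ≠ 0) (x y : V n p) :
    form n p B x (rho B a y) =
      form n p B x y - 2 * form n p B y a * (form n p B a a)⁻¹ * form n p B x a := by
  rw [rho_apply, form_sub_right, form_smul_right]

lemma rho_form_root (a x : V n p) (ha : form n p B a a ≠ 0) :
    form n p B (rho B a x) a = - form n p B x a := by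
  rw [rho_apply, form_sub_left, form_smul_left, mul_assoc, mul_assoc,
    inv_mul_cancel₀ ha]
  ring

lemma rho_invol (a : V n p) (ha : form n p B a a ≠ 0) :
    rho B a * rho B a = 1 := by
  apply LinearMap.ext
  intro x
  show rho B a (rho B a x) = x
  rw [rho_apply (x := rho B a x), rho_form_root a x ha, rho_apply]
  rw [show (2 * - form n p B x a * (form n p B a a)⁻¹)
      = -(2 * form n p B x a * (form n p B a a)⁻¹) by ring, neg_smul]
  abel

/-- The reflection with root `a` as an element of `GL(V)`. -/
def reflU (B : Matrix (Fin n) (Fin n) ℚ) (a : V n p) (ha : form n p B a a ≠ 0) :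
    GLV n p := ⟨rho B a, rho B a, rho_invol a ha, rho_invol a ha⟩

@[simp] lemma reflU_val (a : V n p) (ha : form n p B a a ≠ 0) :
    (reflU B a ha).1 = rho B a := rfl

lemma reflU_inv (a : V n p) (ha : form n p B a a ≠ 0) :
    (reflU B a ha)⁻¹ = reflU B a ha := rfl

lemma reflU_sq (a : V n p) (ha : form n p B a a ≠ 0) :
    reflU B a ha * reflU B a ha = 1 := Units.ext (rho_invol a ha)

lemma rho_isometry (hs : ∀ i j, B i j = B j i) (a : V n p) (ha : form n p B a a ≠ 0)
    (x y : V n p) :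
    form n p B (rho B a x) (rho B a y) = form n p B x y := by
  rw [rho_apply, rho_apply, form_sub_left, form_sub_right, form_sub_right,
    form_smul_left, form_smul_right, form_smul_right, form_smul_left]
  have hay : form n p B a y = form n p B y a := form_comm B hs a y
  have hax : form n p B a x = form n p B x a := form_comm B hs a x
  rw [hay]
  field_simp
  ring

lemma reflU_mem_OV (hs : ∀ i j, B i j = B j i) (a : V n p) (ha : form n p B a a ≠ 0) :
    reflU B a ha ∈ OV n p B := fun x y => rho_isometry hs a ha x y

lemma rho_fix (a x : V n p) (hx : form n p B x a = 0) : rho B a x = x := by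
  rw [rho_apply, hx]
  simp

lemma rho_root (a : V n p) (ha : form n p B a a ≠ 0) : rho B a a = -a := by
  rw [rho_apply, mul_assoc, mul_inv_cancel₀ ha, mul_one]
  rw [show (2 : ZMod p) • a = a + a by rw [two_smul]]
  abel

/-- Any unit acting by the reflection formula is an isometry. -/
lemma mem_OV_of_refl_formula (hs : ∀ i j, B i j = B j i) {g : GLV n p} {a : V n p}
    (ha : form n p B a a ≠ 0)
    (hg : ∀ x, g.1 x = x - (2 * form n p B x a * (form n p B a a)⁻¹) • a) :
    g ∈ OV n p B := by
  intro x y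
  have hx : g.1 x = rho B a x := hg x
  have hy : g.1 y = rho B a y := hg y
  rw [hx, hy]
  exact rho_isometry hs a ha x y

/-- the generators act by the reflection formula -/
lemma r_val_eq (hB : GramOK n B) (hint : PIntegral n p B) (hV : Nonsing n p B ⊤)
    (hodd : p ≠ 2) {r : Fin n → GLV n p} (hr : ReflHyp n p B r) (i : Fin n) :
    (r i).1 = rho B (basisVec n p i) := by
  apply (Pi.basisFun (ZMod p) (Fin n)).ext
  intro j
  have hbv : (Pi.basisFun (ZMod p) (Fin n)) j = basisVec n p j := by
    rw [Pi.basisFun_apply]; rfl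
  rw [hbv]
  rw [hr i j]
  rw [rho_apply, form_basis, form_basis]
  obtain ⟨c, hc, hred⟩ := cartan_red (p := p) hB hint i j
  rw [hc, redQ_int]
  have hBii := normB_ne_zero hB hint hV hodd i
  have hsymm : redQ p (B j i) = redQ p (B i j) := by rw [hB.1 j i]
  rw [hsymm]
  have hcoef : (c : ZMod p) = 2 * redQ p (B i j) * (redQ p (B i i))⁻¹ := by
    push_cast at hred
    field_simp
    linear_combination -hred
  rw [hcoef]

lemma r_eq_reflU (hB : GramOK n B) (hint : PIntegral n p B) (hV : Nonsing n p B ⊤)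
    (hodd : p ≠ 2) {r : Fin n → GLV n p} (hr : ReflHyp n p B r) (i : Fin n) :
    r i = reflU B (basisVec n p i) (norm_basis_ne_zero hB hint hV hodd i) :=
  Units.ext (r_val_eq hB hint hV hodd hr i)

end Refl


section Perp

variable {n p : ℕ} [Fact p.Prime] {B : Matrix (Fin n) (Fin n) ℚ}

lemma form_zero_left (y : V n p) : form n p B 0 y = 0 := by
  have := form_smul_left B 0 0 y
  simpa using this

lemma form_zero_right (x : V n p) : form n p B x 0 = 0 := by
  have := form_smul_right B 0 x 0
  simpa using this

/-- `form` as a bilinear form. -/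
def bform (B : Matrix (Fin n) (Fin n) ℚ) : LinearMap.BilinForm (ZMod p) (V n p) :=
  LinearMap.mk₂ (ZMod p) (form n p B) (form_add_left B) (form_smul_left B)
    (form_add_right B) (form_smul_right B)

@[simp] lemma bform_apply (x y : V n p) : bform B x y = form n p B x y := rfl

/-- Orthogonal complement with respect to `form`. -/
def perpS (B : Matrix (Fin n) (Fin n) ℚ) (U : Submodule (ZMod p) (V n p)) :
    Submodule (ZMod p) (V n p) where
  carrier := {x | ∀ u ∈ U, form n p B x u = 0}
  add_mem' := by
    intro x y hx hy u hu
    rw [form_add_left, hx u hu, hy u hu, add_zero]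
  zero_mem' := fun u _ => form_zero_left u
  smul_mem' := by
    intro c x hx u hu
    rw [form_smul_left, hx u hu, mul_zero]

lemma mem_perpS {U : Submodule (ZMod p) (V n p)} {x : V n p} :
    x ∈ perpS B U ↔ ∀ u ∈ U, form n p B x u = 0 := Iff.rfl

lemma perpS_mono {U U' : Submodule (ZMod p) (V n p)} (h : U ≤ U') :
    perpS B U' ≤ perpS B U := fun _ hx u hu => hx u (h hu)

lemma perpS_sup (U U' : Submodule (ZMod p) (V n p)) :
    perpS B (U ⊔ U') = perpS B U ⊓ perpS B U' := by
  apply le_antisymm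
  · exact le_inf (perpS_mono le_sup_left) (perpS_mono le_sup_right)
  · rintro x ⟨hx1, hx2⟩ u hu
    obtain ⟨a, ha, b, hb, rfl⟩ := Submodule.mem_sup.mp hu
    rw [form_add_right, hx1 a ha, hx2 b hb, add_zero]

lemma perpS_top (hV : Nonsing n p B ⊤) : perpS B (⊤ : Submodule (ZMod p) (V n p)) = ⊥ := by
  apply le_antisymm
  · intro x hx
    exact (Submodule.mem_bot _).mpr (hV x Submodule.mem_top fun y hy => hx y hy)
  · exact bot_le

lemma le_perpS_perpS (hs : ∀ i j, B i j = B j i) (U : Submodule (ZMod p) (V n p)) :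
    U ≤ perpS B (perpS B U) := by
  intro x hx u hu
  rw [form_comm B hs]
  exact hu x hx

/-- Dimension formula for the orthogonal complement. -/
lemma finrank_perpS_add (hV : Nonsing n p B ⊤) (U : Submodule (ZMod p) (V n p)) :
    Module.finrank (ZMod p) (perpS B U) + Module.finrank (ZMod p) U = n := by
  classical
  set L : V n p →ₗ[ZMod p] Module.Dual (ZMod p) U := U.dualRestrict.comp (bform B) with hL
  have hker : LinearMap.ker L = perpS B U := by
    ext x
    constructor
    · intro hx u hu
      have := LinearMap.congr_fun (LinearMap.mem_ker.mp hx) ⟨u, hu⟩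
      simpa [hL] using this
    · intro hx
      rw [LinearMap.mem_ker]
      ext u
      simpa [hL] using hx u u.2
  have hsurj : Function.Surjective L := by
    have h1 : Function.Injective (bform (n := n) (p := p) B) := by
      rw [← LinearMap.ker_eq_bot]
      apply le_antisymm
      · intro x hx
        refine (Submodule.mem_bot _).mpr (hV x Submodule.mem_top fun y _ => ?_)
        have := LinearMap.congr_fun (LinearMap.mem_ker.mp hx) y
        simpa using this
      · exact bot_le
    have h2 : Function.Surjective (bform (n := n) (p := p) B) := by
      have hfr : Module.finrank (ZMod p) (V n p)
          = Module.finrank (ZMod p) (Module.Dual (ZMod p) (V n p)) :=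
        (Subspace.dual_finrank_eq).symm
      exact (LinearMap.injective_iff_surjective_of_finrank_eq_finrank hfr).mp h1
    exact (Subspace.dualRestrict_surjective (W := U)).comp h2
  have hrn := LinearMap.finrank_range_add_finrank_ker L
  rw [LinearMap.range_eq_top.mpr hsurj, hker] at hrn
  have hdd : Module.finrank (ZMod p) (Module.Dual (ZMod p) U)
      = Module.finrank (ZMod p) U := Subspace.dual_finrank_eq
  have hfin : Module.finrank (ZMod p) (V n p) = n := Module.finrank_fin_fun (ZMod p)
  have htop := finrank_top (ZMod p) (Module.Dual (ZMod p) U)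
  rw [htop, hfin, hdd] at hrn
  omega

lemma finrank_perpS (hV : Nonsing n p B ⊤) (U : Submodule (ZMod p) (V n p)) :
    Module.finrank (ZMod p) (perpS B U) = n - Module.finrank (ZMod p) U := by
  have := finrank_perpS_add hV U
  omega

lemma perpS_perpS (hV : Nonsing n p B ⊤) (hs : ∀ i j, B i j = B j i)
    (U : Submodule (ZMod p) (V n p)) : perpS B (perpS B U) = U := by
  have h1 : Module.finrank (ZMod p) U ≤ n := by
    have := finrank_perpS_add hV U; omega
  refine (Submodule.eq_of_le_of_finrank_le (le_perpS_perpS hs U) ?_).symm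
  rw [finrank_perpS hV, finrank_perpS hV]
  omega

/-- linear independence of sub-families of basis vectors -/
lemma finrank_spanV (S : Set (Fin n)) :
    Module.finrank (ZMod p) (spanV n p S) = Nat.card S := by
  classical
  have hli : LinearIndependent (ZMod p) (fun i : S => basisVec n p (i : Fin n)) := by
    have h1 : (fun i : S => basisVec n p (i : Fin n))
        = (⇑(Pi.basisFun (ZMod p) (Fin n)) ∘ (Subtype.val : S → Fin n)) := by
      funext i
      rw [Function.comp_apply, Pi.basisFun_apply]
      rfl
    rw [h1]
    exact (Pi.basisFun (ZMod p) (Fin n)).linearIndependent.comp Subtype.val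
      Subtype.val_injective
  have hrange : Set.range (fun i : S => basisVec n p (i : Fin n)) = basisVec n p '' S := by
    rw [show (fun i : S => basisVec n p (i : Fin n))
        = (basisVec n p ∘ (Subtype.val : S → Fin n)) from rfl, Set.range_comp,
      Subtype.range_val]
  have := finrank_span_eq_card hli
  rw [hrange] at this
  rw [spanV, this, Nat.card_eq_fintype_card]

lemma spanV_top : spanV n p Set.univ = ⊤ := by
  classical
  have := (Pi.basisFun (ZMod p) (Fin n)).span_eq
  rw [spanV]
  rw [← this]
  congr 1
  ext x
  simp only [Set.image_univ, Set.mem_range]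
  constructor
  · rintro ⟨i, rfl⟩; exact ⟨i, (by rw [Pi.basisFun_apply]; rfl)⟩
  · rintro ⟨i, rfl⟩; exact ⟨i, (by rw [Pi.basisFun_apply]; rfl)⟩

lemma spanV_mono {S T : Set (Fin n)} (h : S ⊆ T) : spanV n p S ≤ spanV n p T :=
  Submodule.span_mono (Set.image_mono h)

lemma basisVec_mem_spanV {S : Set (Fin n)} {i : Fin n} (hi : i ∈ S) :
    basisVec n p i ∈ spanV n p S :=
  Submodule.subset_span (Set.mem_image_of_mem _ hi)

lemma spanV_sup (S T : Set (Fin n)) : spanV n p S ⊔ spanV n p T = spanV n p (S ∪ T) := by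
  rw [spanV, spanV, spanV, Set.image_union, Submodule.span_union]

/-- subgroup of `GL(V)` fixing a submodule pointwise -/
def FixGrp (U : Submodule (ZMod p) (V n p)) : Subgroup (GLV n p) where
  carrier := {g | ∀ x ∈ U, g.1 x = x}
  one_mem' := by intro x _; rfl
  mul_mem' := by
    intro a b ha hb x hx
    rw [Units.val_mul, Module.End.mul_apply, hb x hx, ha x hx]
  inv_mem' := by
    intro a ha x hx
    conv_lhs => rw [← ha x hx]
    rw [← Module.End.mul_apply, ← Units.val_mul, inv_mul_cancel, Units.val_one,
      Module.End.one_apply]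

lemma mem_FixGrp {U : Submodule (ZMod p) (V n p)} {g : GLV n p} :
    g ∈ FixGrp U ↔ ∀ x ∈ U, g.1 x = x := Iff.rfl

lemma FixGrp_sup (U U' : Submodule (ZMod p) (V n p)) {g : GLV n p}
    (h1 : g ∈ FixGrp U) (h2 : g ∈ FixGrp U') : g ∈ FixGrp (U ⊔ U') := by
  intro x hx
  obtain ⟨a, ha, b, hb, rfl⟩ := Submodule.mem_sup.mp hx
  rw [map_add, h1 a ha, h2 b hb]

/-- subgroup of `GL(V)` preserving a submodule -/
def PresGrp (U : Submodule (ZMod p) (V n p)) : Subgroup (GLV n p) where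
  carrier := {g | Submodule.map g.1 U = U}
  one_mem' := by
    show Submodule.map (1 : Module.End (ZMod p) (V n p)) U = U
    rw [Module.End.one_eq_id, Submodule.map_id]
  mul_mem' := by
    intro a b ha hb
    show Submodule.map (a * b).1 U = U
    rw [Units.val_mul, Module.End.mul_eq_comp, Submodule.map_comp, hb, ha]
  inv_mem' := by
    intro a ha
    show Submodule.map (a⁻¹).1 U = U
    conv_lhs => rw [← ha]
    rw [← Submodule.map_comp, ← Module.End.mul_eq_comp, ← Units.val_mul, inv_mul_cancel,
      Units.val_one, Module.End.one_eq_id, Submodule.map_id]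

lemma mem_PresGrp {U : Submodule (ZMod p) (V n p)} {g : GLV n p} :
    g ∈ PresGrp U ↔ Submodule.map g.1 U = U := Iff.rfl

lemma mem_PresGrp_of_le {U : Submodule (ZMod p) (V n p)} {g : GLV n p}
    (h : ∀ x ∈ U, g.1 x ∈ U) : g ∈ PresGrp U := by
  have hle : Submodule.map g.1 U ≤ U := by
    rintro _ ⟨x, hx, rfl⟩; exact h x hx
  refine Submodule.eq_of_le_of_finrank_le hle ?_
  have : Module.finrank (ZMod p) (Submodule.map g.1 U) = Module.finrank (ZMod p) U := by
    apply LinearEquiv.finrank_map_eq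
      (LinearEquiv.ofLinear g.1 (g⁻¹).1
        (by rw [← Module.End.mul_eq_comp, ← Units.val_mul, mul_inv_cancel]; rfl)
        (by rw [← Module.End.mul_eq_comp, ← Units.val_mul, inv_mul_cancel]; rfl))
  rw [this]

lemma PresGrp_apply_mem {U : Submodule (ZMod p) (V n p)} {g : GLV n p}
    (hg : g ∈ PresGrp U) {x : V n p} (hx : x ∈ U) : g.1 x ∈ U := by
  rw [mem_PresGrp] at hg
  rw [← hg]
  exact Submodule.mem_map_of_mem hx

end Perp

section Sign

variable {n p : ℕ} [Fact p.Prime] {B : Matrix (Fin n) (Fin n) ℚ}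

/-- sign of an involution in terms of the cardinality of its support -/
lemma invol_sign {α : Type*} [Fintype α] [DecidableEq α] {σ : Equiv.Perm α}
    (h : σ * σ = 1) : ∃ m, σ.support.card = 2 * m ∧ Equiv.Perm.sign σ = (-1) ^ m := by
  have h2 : ∀ k ∈ σ.cycleType, k = 2 := by
    intro k hk
    have hk2 := Equiv.Perm.two_le_of_mem_cycleType hk
    have hdvd : k ∣ orderOf σ := by
      rw [← Equiv.Perm.lcm_cycleType]; exact Multiset.dvd_lcm hk
    have ho : orderOf σ ∣ 2 := orderOf_dvd_of_pow_eq_one (by rw [pow_two]; exact h)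
    have : k ∣ 2 := hdvd.trans ho
    have := Nat.le_of_dvd (by norm_num) this
    omega
  have hrep : σ.cycleType = Multiset.replicate (Multiset.card σ.cycleType) 2 :=
    Multiset.eq_replicate.mpr ⟨rfl, h2⟩
  refine ⟨Multiset.card σ.cycleType, ?_, ?_⟩
  · rw [← Equiv.Perm.sum_cycleType, hrep, Multiset.sum_replicate, Multiset.card_replicate,
      smul_eq_mul, Nat.mul_comm]
  · rw [Equiv.Perm.sign_of_cycleType, hrep, Multiset.sum_replicate, Multiset.card_replicate,
      smul_eq_mul]
    have : 2 * Multiset.card σ.cycleType + Multiset.card σ.cycleType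
        = 2 * Multiset.card σ.cycleType + Multiset.card σ.cycleType := rfl
    rw [pow_add, pow_mul]
    norm_num

lemma neg_one_mem_OV : (-1 : GLV n p) ∈ OV n p B := by
  intro x y
  have hx : ((-1 : GLV n p) : Module.End (ZMod p) (V n p)) x = -x := by
    rw [Units.val_neg, Units.val_one, LinearMap.neg_apply, Module.End.one_apply]
  have hy : ((-1 : GLV n p) : Module.End (ZMod p) (V n p)) y = -y := by
    rw [Units.val_neg, Units.val_one, LinearMap.neg_apply, Module.End.one_apply]
  rw [hx, hy, form_neg_left, form_neg_right, neg_neg]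

lemma neg_mem_OV {g : GLV n p} (hg : g ∈ OV n p B) : -g ∈ OV n p B := by
  have h1 : (-g) = (-1) * g := (neg_one_mul g).symm
  rw [h1]
  exact mul_mem neg_one_mem_OV hg

/-- The sphere of norm `c` vectors. -/
def Sph (B : Matrix (Fin n) (Fin n) ℚ) (c : ZMod p) : Type _ :=
  {x : V n p // form n p B x x = c}

instance (c : ZMod p) : Fintype (Sph (n := n) B c) := by
  unfold Sph; infer_instance

instance (c : ZMod p) : DecidableEq (Sph (n := n) B c) := by
  unfold Sph; infer_instance

/-- An isometry permutes the sphere. -/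
def spherePerm (c : ZMod p) (g : GLV n p) (hg : g ∈ OV n p B) :
    Equiv.Perm (Sph B c) where
  toFun x := ⟨g.1 x.1, by rw [hg x.1 x.1]; exact x.2⟩
  invFun x := ⟨(g⁻¹).1 x.1, by rw [(OV n p B).inv_mem hg x.1 x.1]; exact x.2⟩
  left_inv x := by
    apply Subtype.ext
    show (g⁻¹).1 (g.1 x.1) = x.1
    rw [← Module.End.mul_apply, ← Units.val_mul, inv_mul_cancel, Units.val_one,
      Module.End.one_apply]
  right_inv x := by
    apply Subtype.ext
    show g.1 ((g⁻¹).1 x.1) = x.1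
    rw [← Module.End.mul_apply, ← Units.val_mul, mul_inv_cancel, Units.val_one,
      Module.End.one_apply]

lemma spherePerm_mul (c : ZMod p) {g h : GLV n p} (hg : g ∈ OV n p B) (hh : h ∈ OV n p B) :
    spherePerm c (g * h) (mul_mem hg hh) = spherePerm c g hg * spherePerm c h hh := by
  apply Equiv.ext
  intro x
  apply Subtype.ext
  rfl

lemma spherePerm_congr (c : ZMod p) {g h : GLV n p} (hg : g ∈ OV n p B)
    (hh : h ∈ OV n p B) (e : g = h) : spherePerm c g hg = spherePerm c h hh := by
  subst e; rfl

lemma spherePerm_one (c : ZMod p) : spherePerm (B := B) c 1 (one_mem _) = 1 := by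
  apply Equiv.ext
  intro x
  apply Subtype.ext
  rfl

open scoped Classical in
/-- The sphere-sign character (as a function on all of `GL(V)`). -/
noncomputable def phiF (B : Matrix (Fin n) (Fin n) ℚ) (c : ZMod p) (g : GLV n p) : ℤˣ :=
  if hg : g ∈ OV n p B then Equiv.Perm.sign (spherePerm c g hg) else 1

lemma phiF_mul (c : ZMod p) {g h : GLV n p} (hg : g ∈ OV n p B) (hh : h ∈ OV n p B) :
    phiF B c (g * h) = phiF B c g * phiF B c h := by
  rw [phiF, phiF, phiF, dif_pos hg, dif_pos hh, dif_pos (mul_mem hg hh),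
    spherePerm_mul c hg hh, map_mul]

lemma phiF_one (c : ZMod p) : phiF (n := n) B c 1 = 1 := by
  rw [phiF, dif_pos (one_mem _), spherePerm_one, map_one]

lemma phiF_inv (c : ZMod p) {g : GLV n p} (hg : g ∈ OV n p B) :
    phiF B c g⁻¹ = (phiF B c g)⁻¹ := by
  have h1 : phiF B c g⁻¹ * phiF B c g = 1 := by
    rw [← phiF_mul c ((OV n p B).inv_mem hg) hg, inv_mul_cancel, phiF_one]
  exact eq_inv_of_mul_eq_one_left h1

lemma sq_eq_sq_cases {t t₀ : ZMod p} (h : t ^ 2 = t₀ ^ 2) : t = t₀ ∨ t = -t₀ := by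
  have : (t - t₀) * (t + t₀) = 0 := by linear_combination h
  rcases mul_eq_zero.mp this with h' | h'
  · left; exact sub_eq_zero.mp h'
  · right; exact eq_neg_of_add_eq_zero_left h'

/-- THE key computation: sign of a reflection on the sphere of norm `c`. -/
lemma phiF_reflU (hs : ∀ i j, B i j = B j i) (hodd : p ≠ 2) {a : V n p}
    (ha : form n p B a a ≠ 0) {c : ZMod p} (hc : c ≠ 0) :
    phiF B c (reflU B a ha)
      = if ∃ t : ZMod p, t ^ 2 * form n p B a a = c then -1 else 1 := by
  classical
  haveI : NeZero p := pPrime_neZero ‹_›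
  have h2 : (2 : ZMod p) ≠ 0 := by
    have := two_ne_zero' (p := p) hodd
    intro h; apply this; exact_mod_cast h
  have ha0 : a ≠ 0 := fun h => ha (by rw [h]; exact form_zero_left 0)
  set g := reflU B a ha with hgdef
  have hg : g ∈ OV n p B := reflU_mem_OV hs a ha
  have hng : -g ∈ OV n p B := neg_mem_OV hg
  have hn1 : (-1 : GLV n p) ∈ OV n p B := neg_one_mem_OV
  set σ := spherePerm c g hg with hσ
  set ν := spherePerm c (-1 : GLV n p) hn1 with hν
  set τ := spherePerm c (-g) hng with hτ
  -- σ = ν * τ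
  have hfact : ν * τ = σ := by
    rw [hν, hτ, hσ, ← spherePerm_mul c hn1 hng]
    have hh : (-1 : GLV n p) * (-g) = g := by
      rw [show (-1 : GLV n p) * (-g) = -(-g) from neg_one_mul (-g)]
      exact neg_neg g
    congr 1
  -- ν is a fixed-point-free involution
  have hν2 : ν * ν = 1 := by
    have hh1 : (-1 : GLV n p) * (-1) = 1 := by
      rw [show ((-1 : GLV n p)) * (-1) = -(-1) from neg_one_mul ((-1 : GLV n p))]
      exact neg_neg (1 : GLV n p)
    have hcg := spherePerm_congr (B := B) c (mul_mem hn1 hn1) (one_mem _) hh1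
    rw [hν, ← spherePerm_mul c hn1 hn1, hcg, spherePerm_one]
  have hνval : ∀ x : Sph B c, (ν x).1 = -(x.1) := by
    intro x
    show ((-1 : GLV n p) : Module.End (ZMod p) (V n p)) x.1 = -(x.1)
    rw [Units.val_neg, Units.val_one, LinearMap.neg_apply, Module.End.one_apply]
  have hνfree : ∀ x : Sph B c, ν x ≠ x := by
    intro x hx
    have hval : -(x.1) = x.1 := by
      rw [← hνval x, hx]
    have hx0 : x.1 = 0 := by
      have h2x : (2 : ZMod p) • x.1 = 0 := by
        rw [two_smul]
        nth_rewrite 1 [← hval]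
        exact neg_add_cancel x.1
      rcases smul_eq_zero.mp h2x with h | h
      · exact absurd h h2
      · exact h
    exact hc (by rw [← x.2, hx0]; exact form_zero_left 0)
  -- τ is an involution
  have hτ2 : τ * τ = 1 := by
    have hh1 : (-g) * (-g) = 1 := by
      rw [show (-g) * (-g) = g * g from neg_mul_neg g g]; exact reflU_sq a ha
    have hcg := spherePerm_congr (B := B) c (mul_mem hng hng) (one_mem _) hh1
    rw [hτ, ← spherePerm_mul c hng hng, hcg, spherePerm_one]
  -- fixed points of τ
  have hτfix : ∀ x : Sph B c, τ x = x ↔ ∃ t : ZMod p, x.1 = t • a := by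
    intro x
    have hτx : (τ x).1 = -(g.1 x.1) := by
      simp [hτ, spherePerm, Units.val_neg]
      rfl
    constructor
    · intro hfix
      have h1 : -(g.1 x.1) = x.1 := by rw [← hτx, hfix]
      have h2' : g.1 x.1 = x.1 - (2 * form n p B x.1 a * (form n p B a a)⁻¹) • a :=
        rho_apply a x.1
      have h3 : (2 * form n p B x.1 a * (form n p B a a)⁻¹) • a = (2 : ZMod p) • x.1 := by
        rw [h2', neg_sub] at h1
        rw [two_smul]
        exact sub_eq_iff_eq_add.mp h1
      refine ⟨2⁻¹ * (2 * form n p B x.1 a * (form n p B a a)⁻¹), ?_⟩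
      rw [mul_smul]
      rw [h3, smul_smul, inv_mul_cancel₀ h2, one_smul]
    · rintro ⟨t, hxt⟩
      apply Subtype.ext
      rw [hτx]
      have : g.1 x.1 = -x.1 := by
        rw [hxt]
        show rho B a (t • a) = -(t • a)
        rw [map_smul, rho_root a ha, smul_neg]
      rw [this, neg_neg]
  -- count fixed points of τ
  set Fset := Finset.univ.filter (fun x : Sph B c => τ x = x) with hFset
  have hcard : Fset.card = if ∃ t : ZMod p, t ^ 2 * form n p B a a = c then 2 else 0 := by
    split_ifs with hex
    · obtain ⟨t₀, ht₀⟩ := hex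
      have ht₀0 : t₀ ≠ 0 := by
        intro h; rw [h] at ht₀; simp at ht₀; exact hc ht₀.symm
      have hmem1 : form n p B (t₀ • a) (t₀ • a) = c := by
        rw [form_smul_left, form_smul_right, ← mul_assoc, ← pow_two]; exact ht₀
      have hmem2 : form n p B ((-t₀) • a) ((-t₀) • a) = c := by
        rw [form_smul_left, form_smul_right, ← mul_assoc, ← pow_two, neg_pow_two]
        exact ht₀
      have hne : (⟨t₀ • a, hmem1⟩ : Sph B c) ≠ ⟨(-t₀) • a, hmem2⟩ := by
        intro h
        have := congrArg Subtype.val h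
        simp only at this
        have h2t : (t₀ - -t₀) • a = 0 := by
          rw [sub_smul, this, sub_self]
        rcases smul_eq_zero.mp h2t with h' | h'
        · have : (2 : ZMod p) * t₀ = 0 := by linear_combination h'
          rcases mul_eq_zero.mp this with h'' | h''
          · exact h2 h''
          · exact ht₀0 h''
        · exact ha0 h'
      have : Fset = {⟨t₀ • a, hmem1⟩, ⟨(-t₀) • a, hmem2⟩} := by
        ext y
        simp only [hFset, Finset.mem_filter, Finset.mem_univ, true_and,
          Finset.mem_insert, Finset.mem_singleton]
        erw [Finset.mem_insert, Finset.mem_singleton]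
        rw [hτfix y]
        constructor
        · rintro ⟨t, hyt⟩
          have hyc : t ^ 2 * form n p B a a = c := by
            rw [← y.2, hyt, form_smul_left, form_smul_right, ← mul_assoc, ← pow_two]
          have : t ^ 2 = t₀ ^ 2 := by
            have := hyc.trans ht₀.symm
            exact mul_right_cancel₀ ha this
          rcases sq_eq_sq_cases this with h' | h'
          · left; apply Subtype.ext; rw [hyt, h']
          · right; apply Subtype.ext; rw [hyt, h']
        · rintro (h' | h')
          · exact ⟨t₀, congrArg Subtype.val h'⟩
          · exact ⟨-t₀, congrArg Subtype.val h'⟩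
      rw [this]
      exact Finset.card_pair hne
    · have : Fset = ∅ := by
        ext y
        simp only [hFset, Finset.mem_filter, Finset.mem_univ, true_and,
          Finset.notMem_empty, iff_false]
        rw [hτfix y]
        rintro ⟨t, hyt⟩
        apply hex
        refine ⟨t, ?_⟩
        rw [← y.2, hyt, form_smul_left, form_smul_right, ← mul_assoc, ← pow_two]
      rw [this, Finset.card_empty]
  -- supports
  have hsupν : ν.support = Finset.univ := by
    apply Finset.eq_univ_iff_forall.mpr
    intro x
    rw [Equiv.Perm.mem_support]
    exact hνfree x
  have hsupτ : τ.support.card = Fintype.card (Sph B c) - Fset.card := by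
    have : τ.support = Finset.univ \ Fset := by
      ext x
      rw [Equiv.Perm.mem_support, Finset.mem_sdiff, hFset]
      simp
    rw [this, Finset.card_sdiff_of_subset (Finset.filter_subset _ _), Finset.card_univ]
  obtain ⟨mν, hmν, hsgnν⟩ := invol_sign hν2
  obtain ⟨mτ, hmτ, hsgnτ⟩ := invol_sign hτ2
  rw [hsupν, Finset.card_univ] at hmν
  rw [hsupτ, hcard] at hmτ
  have hsgnσ : Equiv.Perm.sign σ = (-1 : ℤˣ) ^ (mν + mτ) := by
    rw [← hfact, map_mul, hsgnν, hsgnτ, pow_add]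
  rw [phiF, dif_pos hg, ← hσ, hsgnσ]
  split_ifs with hex
  · rw [if_pos hex] at hmτ
    have hle : (if ∃ t : ZMod p, t ^ 2 * form n p B a a = c then 2 else 0)
        ≤ Fintype.card (Sph B c) := by
      rw [← hcard, ← Finset.card_univ]
      exact Finset.card_le_univ Fset
    rw [if_pos hex] at hle
    have hodd' : Odd (mν + mτ) := by
      refine ⟨mν - 1, ?_⟩
      omega
    rw [hodd'.neg_one_pow]
  · rw [if_neg hex] at hmτ
    have heven : Even (mν + mτ) := by
      refine ⟨mν, ?_⟩
      omega
    rw [heven.neg_one_pow]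

end Sign

section Chars

variable {n p : ℕ} [Fact p.Prime] {B : Matrix (Fin n) (Fin n) ℚ}

lemma unit_eq_reflU {g : GLV n p} {a : V n p} (ha : form n p B a a ≠ 0)
    (hform : ∀ x, g.1 x = x - (2 * form n p B x a * (form n p B a a)⁻¹) • a) :
    g = reflU B a ha :=
  Units.ext (LinearMap.ext fun x => by rw [hform x]; rfl)

lemma exists_nonsquare' (hodd : p ≠ 2) :
    ∃ u : ZMod p, u ≠ 0 ∧ ¬ ∃ t : ZMod p, t ^ 2 = u := by
  obtain ⟨u, hu⟩ := FiniteField.exists_nonsquare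
    (F := ZMod p) (by rw [ZMod.ringChar_zmod_n]; exact hodd)
  refine ⟨u, ?_, ?_⟩
  · intro h; exact hu ⟨0, by rw [h, mul_zero]⟩
  · rintro ⟨t, ht⟩; exact hu ⟨t, by rw [← ht, pow_two]⟩

/-- on a square-norm reflection, `phiF u₀` is `1` for `u₀` nonsquare -/
lemma phiF_sq_refl (hs : ∀ i j, B i j = B j i) (hodd : p ≠ 2) {g : GLV n p}
    {a : V n p} {t : ZMod p} (ht0 : t ≠ 0) (ht : form n p B a a = t ^ 2)
    (hform : ∀ x, g.1 x = x - (2 * form n p B x a * (form n p B a a)⁻¹) • a)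
    {u₀ : ZMod p} (hu0 : u₀ ≠ 0) (hnsq : ¬ ∃ s : ZMod p, s ^ 2 = u₀) :
    phiF B u₀ g = 1 := by
  have ha : form n p B a a ≠ 0 := by rw [ht]; exact pow_ne_zero 2 ht0
  rw [unit_eq_reflU ha hform, phiF_reflU hs hodd ha hu0]
  rw [if_neg]
  rintro ⟨s, hsq⟩
  exact hnsq ⟨s * t, by rw [mul_pow]; rw [ht] at hsq; linear_combination hsq⟩

/-- on a square-norm reflection, `phiF 1` is `-1` -/
lemma phiF_one_sq_refl (hs : ∀ i j, B i j = B j i) (hodd : p ≠ 2) {g : GLV n p}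
    {a : V n p} {t : ZMod p} (ht0 : t ≠ 0) (ht : form n p B a a = t ^ 2)
    (hform : ∀ x, g.1 x = x - (2 * form n p B x a * (form n p B a a)⁻¹) • a) :
    phiF B (1 : ZMod p) g = -1 := by
  have ha : form n p B a a ≠ 0 := by rw [ht]; exact pow_ne_zero 2 ht0
  rw [unit_eq_reflU ha hform, phiF_reflU hs hodd ha one_ne_zero]
  rw [if_pos]
  exact ⟨t⁻¹, by rw [ht]; field_simp⟩

/-- on a nonsquare-norm reflection, `phiF 1` is `1` -/
lemma phiF_one_nonsq_refl (hs : ∀ i j, B i j = B j i) (hodd : p ≠ 2) {g : GLV n p}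
    {a : V n p} (hns : ∀ t : ZMod p, form n p B a a ≠ t ^ 2)
    (hform : ∀ x, g.1 x = x - (2 * form n p B x a * (form n p B a a)⁻¹) • a) :
    phiF B (1 : ZMod p) g = 1 := by
  have ha : form n p B a a ≠ 0 := fun h => hns 0 (by rw [h]; ring)
  rw [unit_eq_reflU ha hform, phiF_reflU hs hodd ha one_ne_zero]
  rw [if_neg]
  rintro ⟨s, hsq⟩
  have hs0 : s ≠ 0 := by
    intro h; rw [h] at hsq; simp at hsq
  exact hns s⁻¹ (by field_simp; linear_combination hsq)

/-- on a nonsquare-norm reflection, `phiF u₀` is `-1` for `u₀` nonsquare -/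
lemma phiF_nonsq_refl (hs : ∀ i j, B i j = B j i) (hodd : p ≠ 2) {g : GLV n p}
    {a : V n p} (hns : ∀ t : ZMod p, form n p B a a ≠ t ^ 2)
    (hform : ∀ x, g.1 x = x - (2 * form n p B x a * (form n p B a a)⁻¹) • a)
    {u₀ : ZMod p} (hu0 : u₀ ≠ 0) (hnsq : ¬ ∃ s : ZMod p, s ^ 2 = u₀) :
    phiF B u₀ g = -1 := by
  classical
  have ha : form n p B a a ≠ 0 := fun h => hns 0 (by rw [h]; ring)
  rw [unit_eq_reflU ha hform, phiF_reflU hs hodd ha hu0]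
  rw [if_pos]
  -- u₀ and Q a are both nonsquares, so their product is a square
  have h1 : ¬ IsSquare (form n p B a a) := by
    rintro ⟨r, hr⟩; exact hns r (by rw [hr, pow_two])
  have h2 : ¬ IsSquare u₀ := by
    rintro ⟨r, hr⟩; exact hnsq ⟨r, by rw [hr, pow_two]⟩
  have hχ1 : quadraticChar (ZMod p) (form n p B a a) = -1 :=
    quadraticChar_neg_one_iff_not_isSquare.mpr h1
  have hχ2 : quadraticChar (ZMod p) u₀ = -1 :=
    quadraticChar_neg_one_iff_not_isSquare.mpr h2
  have hmul : quadraticChar (ZMod p) (u₀ * form n p B a a) = 1 := by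
    rw [map_mul, hχ1, hχ2]; ring
  have hne : u₀ * form n p B a a ≠ 0 := mul_ne_zero hu0 ha
  have hsq : IsSquare (u₀ * form n p B a a) :=
    (quadraticChar_one_iff_isSquare hne).mp hmul
  obtain ⟨r, hr⟩ := hsq
  have hr0 : r ≠ 0 := by
    intro h; rw [h, mul_zero] at hr; exact hne hr
  refine ⟨r * (form n p B a a)⁻¹, ?_⟩
  have hstep : (r * (form n p B a a)⁻¹) ^ 2 * form n p B a a
      = r ^ 2 * (form n p B a a)⁻¹ := by
    field_simp
  rw [hstep, show r ^ 2 = u₀ * form n p B a a by rw [pow_two]; exact hr.symm]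
  field_simp

/-- every element of an `O₁`-type closure is an isometry with trivial nonsquare-sphere sign -/
lemma O1_prop (hs : ∀ i j, B i j = B j i) (hodd : p ≠ 2)
    (W' : Submodule (ZMod p) (V n p)) {u₀ : ZMod p} (hu0 : u₀ ≠ 0)
    (hnsq : ¬ ∃ s : ZMod p, s ^ 2 = u₀) {g : GLV n p} (hg : g ∈ O1 n p B W') :
    g ∈ OV n p B ∧ phiF B u₀ g = 1 := by
  refine Subgroup.closure_induction ?_ ?_ ?_ ?_ hg
  · rintro x ⟨a, haW, ⟨t, ht0, ht⟩, hform⟩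
    have ha : form n p B a a ≠ 0 := by rw [ht]; exact pow_ne_zero 2 ht0
    exact ⟨mem_OV_of_refl_formula hs ha hform, phiF_sq_refl hs hodd ht0 ht hform hu0 hnsq⟩
  · exact ⟨one_mem _, phiF_one u₀⟩
  · rintro x y _ _ ⟨hx1, hx2⟩ ⟨hy1, hy2⟩
    exact ⟨mul_mem hx1 hy1, by rw [phiF_mul u₀ hx1 hy1, hx2, hy2, mul_one]⟩
  · rintro x _ ⟨hx1, hx2⟩
    exact ⟨(OV n p B).inv_mem hx1, by rw [phiF_inv u₀ hx1, hx2]; rfl⟩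

/-- every element of an `O₂`-type closure is an isometry with trivial unit-sphere sign -/
lemma O2_prop (hs : ∀ i j, B i j = B j i) (hodd : p ≠ 2)
    (W' : Submodule (ZMod p) (V n p)) {g : GLV n p} (hg : g ∈ O2 n p B W') :
    g ∈ OV n p B ∧ phiF B (1 : ZMod p) g = 1 := by
  refine Subgroup.closure_induction ?_ ?_ ?_ ?_ hg
  · rintro x ⟨a, haW, hns, hform⟩
    have ha : form n p B a a ≠ 0 := fun h => hns 0 (by rw [h]; ring)
    exact ⟨mem_OV_of_refl_formula hs ha hform, phiF_one_nonsq_refl hs hodd hns hform⟩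
  · exact ⟨one_mem _, phiF_one 1⟩
  · rintro x y _ _ ⟨hx1, hx2⟩ ⟨hy1, hy2⟩
    exact ⟨mul_mem hx1 hy1, by rw [phiF_mul 1 hx1 hy1, hx2, hy2, mul_one]⟩
  · rintro x _ ⟨hx1, hx2⟩
    exact ⟨(OV n p B).inv_mem hx1, by rw [phiF_inv 1 hx1, hx2]; rfl⟩

end Chars

section Cards

variable {n p : ℕ} [Fact p.Prime]

lemma card_set_ne (k : Fin n) : Nat.card {i : Fin n | i ≠ k} = n - 1 := by
  classical
  rw [Nat.card_eq_fintype_card]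
  rw [Fintype.card_subtype]
  have : Finset.univ.filter (fun i : Fin n => i ∈ {i : Fin n | i ≠ k})
      = Finset.univ.erase k := by
    ext i
    simp [Finset.mem_erase]
  rw [this, Finset.card_erase_of_mem (Finset.mem_univ k), Finset.card_univ, Fintype.card_fin]

lemma card_ne0 (hn : 3 ≤ n) : Nat.card {i : Fin n | (i : ℕ) ≠ 0} = n - 1 := by
  have h0 : (0 : ℕ) < n := by omega
  have : {i : Fin n | (i : ℕ) ≠ 0} = {i : Fin n | i ≠ ⟨0, h0⟩} := by
    ext i; simp [Fin.ext_iff]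
  rw [this, card_set_ne]

lemma card_nelast (hn : 3 ≤ n) : Nat.card {i : Fin n | (i : ℕ) ≠ n - 1} = n - 1 := by
  have h0 : n - 1 < n := by omega
  have : {i : Fin n | (i : ℕ) ≠ n - 1} = {i : Fin n | i ≠ ⟨n - 1, h0⟩} := by
    ext i; simp [Fin.ext_iff]
  rw [this, card_set_ne]

lemma card_mid (hn : 3 ≤ n) :
    Nat.card {i : Fin n | (i : ℕ) ≠ 0 ∧ (i : ℕ) ≠ n - 1} = n - 2 := by
  classical
  have h0 : (0 : ℕ) < n := by omega
  have h1 : n - 1 < n := by omega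
  rw [Nat.card_eq_fintype_card, Fintype.card_subtype]
  have heq : Finset.univ.filter
      (fun i : Fin n => i ∈ {i : Fin n | (i : ℕ) ≠ 0 ∧ (i : ℕ) ≠ n - 1})
      = (Finset.univ.erase ⟨0, h0⟩).erase ⟨n - 1, h1⟩ := by
    ext i
    simp only [Finset.mem_filter, Finset.mem_univ, true_and, Set.mem_setOf_eq,
      Finset.mem_erase, ne_eq, Fin.ext_iff]
    tauto
  have hmem : (⟨n - 1, h1⟩ : Fin n) ∈ Finset.univ.erase ⟨0, h0⟩ := by
    rw [Finset.mem_erase]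
    refine ⟨?_, Finset.mem_univ _⟩
    simp only [ne_eq, Fin.ext_iff]
    omega
  rw [heq, Finset.card_erase_of_mem hmem,
    Finset.card_erase_of_mem (Finset.mem_univ _), Finset.card_univ, Fintype.card_fin]
  omega

end Cards

section HFacts

variable {n p : ℕ} [Fact p.Prime] {B : Matrix (Fin n) (Fin n) ℚ}

/-- generators with roots spanning `spanV T` -/
lemma closure_le_fix (hB : GramOK n B) (hint : PIntegral n p B) (hV : Nonsing n p B ⊤)
    (hodd : p ≠ 2) {r : Fin n → GLV n p} (hr : ReflHyp n p B r) (T : Set (Fin n)) :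
    Subgroup.closure (r '' T) ≤
      OV n p B ⊓ FixGrp (perpS B (spanV n p T)) ⊓ PresGrp (spanV n p T) := by
  rw [Subgroup.closure_le]
  rintro _ ⟨i, hi, rfl⟩
  have hri := r_eq_reflU hB hint hV hodd hr i
  refine ⟨⟨?_, ?_⟩, ?_⟩
  · rw [hri]; exact reflU_mem_OV hB.1 _ _
  · intro x hx
    rw [r_val_eq hB hint hV hodd hr i]
    exact rho_fix _ x (hx _ (basisVec_mem_spanV hi))
  · apply mem_PresGrp_of_le
    intro x hx
    rw [r_val_eq hB hint hV hodd hr i, rho_apply]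
    exact Submodule.sub_mem _ hx
      (Submodule.smul_mem _ _ (basisVec_mem_spanV hi))

/-- The orthogonal complement of `W` is the sum of the two hyperplane complements. -/
lemma perpW_eq (hB : GramOK n B) (hV : Nonsing n p B ⊤) (hn : 3 ≤ n) :
    perpS B (spanV n p {i : Fin n | (i : ℕ) ≠ 0 ∧ (i : ℕ) ≠ n - 1})
      = perpS B (spanV n p {i : Fin n | (i : ℕ) ≠ 0})
        ⊔ perpS B (spanV n p {i : Fin n | (i : ℕ) ≠ n - 1}) := by
  set W := spanV n p {i : Fin n | (i : ℕ) ≠ 0 ∧ (i : ℕ) ≠ n - 1}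
  set V0 := spanV n p {i : Fin n | (i : ℕ) ≠ 0}
  set V1 := spanV n p {i : Fin n | (i : ℕ) ≠ n - 1}
  have hW0 : W ≤ V0 := spanV_mono (fun i hi => hi.1)
  have hW1 : W ≤ V1 := spanV_mono (fun i hi => hi.2)
  have hsupV : V0 ⊔ V1 = ⊤ := by
    rw [spanV_sup]
    have : {i : Fin n | (i : ℕ) ≠ 0} ∪ {i : Fin n | (i : ℕ) ≠ n - 1} = Set.univ := by
      ext i
      simp only [Set.mem_union, Set.mem_setOf_eq, Set.mem_univ, iff_true]
      omega
    rw [this, spanV_top]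
  have hinf : perpS B V0 ⊓ perpS B V1 = ⊥ := by
    rw [← perpS_sup, hsupV, perpS_top hV]
  have hfr0 : Module.finrank (ZMod p) (perpS B V0) = 1 := by
    rw [finrank_perpS hV, finrank_spanV, card_ne0 hn]; omega
  have hfr1 : Module.finrank (ZMod p) (perpS B V1) = 1 := by
    rw [finrank_perpS hV, finrank_spanV, card_nelast hn]; omega
  have hfrW : Module.finrank (ZMod p) (perpS B W) = 2 := by
    rw [finrank_perpS hV, finrank_spanV, card_mid hn]; omega
  have hle : perpS B V0 ⊔ perpS B V1 ≤ perpS B W :=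
    sup_le (perpS_mono hW0) (perpS_mono hW1)
  have hfrsup : Module.finrank (ZMod p) (perpS B V0 ⊔ perpS B V1 :
      Submodule (ZMod p) (V n p)) = 2 := by
    have := Submodule.finrank_sup_add_finrank_inf_eq (perpS B V0) (perpS B V1)
    rw [hinf, hfr0, hfr1, finrank_bot] at this
    omega
  exact (Submodule.eq_of_le_of_finrank_le hle (by rw [hfrW, hfrsup])).symm

/-- facts about elements of `G₀ ⊓ G_{n-1}` -/
lemma Hfacts (hB : GramOK n B) (hint : PIntegral n p B) (hV : Nonsing n p B ⊤)
    (hodd : p ≠ 2) {r : Fin n → GLV n p} (hr : ReflHyp n p B r) (hn : 3 ≤ n)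
    {g : GLV n p}
    (hgA : g ∈ Subgroup.closure (r '' {i : Fin n | (i : ℕ) ≠ 0}))
    (hgC : g ∈ Subgroup.closure (r '' {i : Fin n | (i : ℕ) ≠ n - 1})) :
    g ∈ OV n p B ∧
      (∀ x ∈ perpS B (spanV n p {i : Fin n | (i : ℕ) ≠ 0 ∧ (i : ℕ) ≠ n - 1}), g.1 x = x) ∧
      (∀ w ∈ spanV n p {i : Fin n | (i : ℕ) ≠ 0 ∧ (i : ℕ) ≠ n - 1},
        g.1 w ∈ spanV n p {i : Fin n | (i : ℕ) ≠ 0 ∧ (i : ℕ) ≠ n - 1}) := by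
  set W := spanV n p {i : Fin n | (i : ℕ) ≠ 0 ∧ (i : ℕ) ≠ n - 1}
  have hA := closure_le_fix hB hint hV hodd hr {i : Fin n | (i : ℕ) ≠ 0} hgA
  have hC := closure_le_fix hB hint hV hodd hr {i : Fin n | (i : ℕ) ≠ n - 1} hgC
  have hOV : g ∈ OV n p B := hA.1.1
  have hfix : ∀ x ∈ perpS B W, g.1 x = x := by
    have := FixGrp_sup _ _ hA.1.2 hC.1.2
    rw [← perpW_eq hB hV hn] at this
    exact this
  refine ⟨hOV, hfix, ?_⟩
  intro w hw
  have hmem : g.1 w ∈ perpS B (perpS B W) := by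
    intro u hu
    have h1 : form n p B (g.1 w) (g.1 u) = form n p B w u := hOV w u
    rw [hfix u hu] at h1
    rw [h1]
    rw [form_comm B hB.1]
    exact hu w hw
  rwa [perpS_perpS hV hB.1] at hmem

end HFacts

section Core

variable {n p : ℕ} [Fact p.Prime] {B : Matrix (Fin n) (Fin n) ℚ}

lemma glv_cancel (g : GLV n p) (y : V n p) : g.1 ((g⁻¹).1 y) = y := by
  rw [← Module.End.mul_apply, ← Units.val_mul, mul_inv_cancel, Units.val_one,
    Module.End.one_apply]

lemma glv_cancel' (g : GLV n p) (y : V n p) : (g⁻¹).1 (g.1 y) = y := by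
  rw [← Module.End.mul_apply, ← Units.val_mul, inv_mul_cancel, Units.val_one,
    Module.End.one_apply]

/-- Conjugation preserves `O₁(W)` for any isometry preserving `W`. -/
lemma conj_O1 (hs : ∀ i j, B i j = B j i) {W : Submodule (ZMod p) (V n p)}
    {s : GLV n p} (hsO : s ∈ OV n p B) (hsW : ∀ w ∈ W, s.1 w ∈ W)
    {d : GLV n p} (hd : d ∈ O1 n p B W) : s * d * s⁻¹ ∈ O1 n p B W := by
  revert hd
  refine fun hd => Subgroup.closure_induction ?_ ?_ ?_ ?_ hd
  · rintro x ⟨a, haW, ⟨t, ht0, ht⟩, hform⟩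
    have ha : form n p B a a ≠ 0 := by rw [ht]; exact pow_ne_zero 2 ht0
    apply Subgroup.subset_closure
    refine ⟨s.1 a, hsW a haW, ⟨t, ht0, by rw [hsO a a]; exact ht⟩, ?_⟩
    intro y
    have h1 : (s * x * s⁻¹).1 y = s.1 (x.1 ((s⁻¹).1 y)) := by
      rw [Units.val_mul, Units.val_mul, Module.End.mul_apply, Module.End.mul_apply]
    rw [h1, hform ((s⁻¹).1 y), map_sub, map_smul, glv_cancel]
    congr 2
    have h2 : form n p B ((s⁻¹).1 y) a = form n p B y (s.1 a) := by
      conv_rhs => rw [show y = s.1 ((s⁻¹).1 y) from (glv_cancel s y).symm]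
      rw [hsO]
    rw [h2, hsO a a]
  · rw [mul_one, mul_inv_cancel]; exact one_mem _
  · intro x y _ _ hx hy
    have : s * (x * y) * s⁻¹ = (s * x * s⁻¹) * (s * y * s⁻¹) := by group
    rw [this]; exact mul_mem hx hy
  · intro x _ hx
    have : s * x⁻¹ * s⁻¹ = (s * x * s⁻¹)⁻¹ := by group
    rw [this]; exact inv_mem hx

/-- THE CORE: one singular side forces `g` into `D`. -/
lemma core (hB : GramOK n B) (hint : PIntegral n p B) (hV : Nonsing n p B ⊤)
    (hodd : p ≠ 2) {r : Fin n → GLV n p} (hr : ReflHyp n p B r) (hn : 3 ≤ n)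
    (hV0n1 : Nonsing n p B (spanV n p {i : Fin n | (i : ℕ) ≠ 0 ∧ (i : ℕ) ≠ n - 1}))
    (T : Set (Fin n)) (k : Fin n) (hkT : k ∈ T)
    (hTS : ∀ i ∈ T, i ≠ k → ((i : ℕ) ≠ 0 ∧ (i : ℕ) ≠ n - 1))
    (hST : ∀ i : Fin n, ((i : ℕ) ≠ 0 ∧ (i : ℕ) ≠ n - 1) → i ∈ T)
    (hcardT : Nat.card T = n - 1)
    {l : V n p} (hl0 : l ≠ 0) (hlVs : l ∈ spanV n p T)
    (hlperp : ∀ v ∈ spanV n p T, form n p B l v = 0)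
    (hD : Subgroup.closure (r '' {i : Fin n | (i : ℕ) ≠ 0 ∧ (i : ℕ) ≠ n - 1})
        = O1 n p B (spanV n p {i : Fin n | (i : ℕ) ≠ 0 ∧ (i : ℕ) ≠ n - 1}))
    (hGO1 : Subgroup.closure (Set.range r) = O1 n p B ⊤)
    {g : GLV n p} (hgT : g ∈ Subgroup.closure (r '' T))
    (hgW : ∀ w ∈ spanV n p {i : Fin n | (i : ℕ) ≠ 0 ∧ (i : ℕ) ≠ n - 1},
      g.1 w ∈ spanV n p {i : Fin n | (i : ℕ) ≠ 0 ∧ (i : ℕ) ≠ n - 1})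
    (hgfix : ∀ x ∈ perpS B (spanV n p {i : Fin n | (i : ℕ) ≠ 0 ∧ (i : ℕ) ≠ n - 1}),
      g.1 x = x) :
    g ∈ Subgroup.closure (r '' {i : Fin n | (i : ℕ) ≠ 0 ∧ (i : ℕ) ≠ n - 1}) := by
  classical
  set SS : Set (Fin n) := {i : Fin n | (i : ℕ) ≠ 0 ∧ (i : ℕ) ≠ n - 1} with hSS
  set W := spanV n p SS with hW
  set Vs := spanV n p T with hVs
  set L : Submodule (ZMod p) (V n p) := Submodule.span (ZMod p) {l} with hL
  set D := Subgroup.closure (r '' SS) with hDdef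
  have hWVs : W ≤ Vs := spanV_mono (fun i hi => hST i hi)
  -- `l ∉ W`, so `W ⊓ L = ⊥` and `W ⊔ L = Vs`
  have hlW : l ∉ W := by
    intro h
    exact hl0 (hV0n1 l h fun y hy => hlperp y (hWVs hy))
  have hWL : W ⊓ L = ⊥ := by
    rw [eq_bot_iff]
    rintro x ⟨hxW, hxL⟩
    obtain ⟨c, rfl⟩ := Submodule.mem_span_singleton.mp hxL
    rcases eq_or_ne c 0 with rfl | hc
    · rw [zero_smul]; exact Submodule.zero_mem _
    · exfalso
      apply hlW
      have : c⁻¹ • (c • l) ∈ W := Submodule.smul_mem _ _ hxW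
      rwa [smul_smul, inv_mul_cancel₀ hc, one_smul] at this
  have hfrW : Module.finrank (ZMod p) W = n - 2 := by
    rw [hW, finrank_spanV, card_mid hn]
  have hfrVs : Module.finrank (ZMod p) Vs = n - 1 := by
    rw [hVs, finrank_spanV, hcardT]
  have hfrL : Module.finrank (ZMod p) L = 1 := finrank_span_singleton hl0
  have hVseq : W ⊔ L = Vs := by
    have hle : W ⊔ L ≤ Vs := sup_le hWVs
      ((Submodule.span_singleton_le_iff_mem l Vs).mpr hlVs)
    refine Submodule.eq_of_le_of_finrank_le hle ?_
    have := Submodule.finrank_sup_add_finrank_inf_eq W L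
    rw [hWL, finrank_bot, hfrW, hfrL] at this
    rw [hfrVs]
    omega
  -- decompose `b_k = w* + t•l`
  have hbk : basisVec n p k ∈ Vs := basisVec_mem_spanV hkT
  rw [← hVseq] at hbk
  obtain ⟨w, hwW, z, hzL, hsum⟩ := Submodule.mem_sup.mp hbk
  obtain ⟨t, rfl⟩ := Submodule.mem_span_singleton.mp hzL
  -- form computations
  have hlw : form n p B l w = 0 := hlperp w (hWVs hwW)
  have hll : form n p B l l = 0 := hlperp l hlVs
  have hwl : form n p B w l = 0 := by rw [form_comm B hB.1]; exact hlw
  have hQk : form n p B (basisVec n p k) (basisVec n p k) = form n p B w w := by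
    rw [← hsum, form_add_left, form_add_right, form_add_right, form_smul_left,
      form_smul_right, form_smul_right, form_smul_left, hwl, hlw, hll]
    ring
  have hQw : form n p B w w ≠ 0 := by
    rw [← hQk]; exact norm_basis_ne_zero hB hint hV hodd k
  -- the special reflection
  set s := reflU B w hQw with hs_def
  have hsO : s ∈ OV n p B := reflU_mem_OV hB.1 w hQw
  have hsW : ∀ x ∈ W, s.1 x ∈ W := by
    intro x hx
    show rho B w x ∈ W
    rw [rho_apply]
    exact Submodule.sub_mem _ hx (Submodule.smul_mem _ _ hwW)
  have hsfix : ∀ x ∈ perpS B W, s.1 x = x := by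
    intro x hx
    exact rho_fix w x (hx w hwW)
  -- the subgroup E
  set E := Subgroup.closure (insert s (r '' SS)) with hE
  have hDE : D ≤ E := Subgroup.closure_mono (Set.subset_insert _ _)
  have hsE : s ∈ E := Subgroup.subset_closure (Set.mem_insert _ _)
  have hgen : ∀ i ∈ SS, r i ∈ D := fun i hi =>
    Subgroup.subset_closure (Set.mem_image_of_mem _ hi)
  have hE_facts : E ≤ OV n p B ⊓ FixGrp (perpS B W) ⊓ PresGrp W := by
    rw [hE, Subgroup.closure_le]
    rintro x (rfl | ⟨i, hi, rfl⟩)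
    · refine ⟨⟨hsO, hsfix⟩, mem_PresGrp_of_le hsW⟩
    · have hbi : basisVec n p i ∈ W := basisVec_mem_spanV hi
      refine ⟨⟨?_, ?_⟩, ?_⟩
      · rw [r_eq_reflU hB hint hV hodd hr i]; exact reflU_mem_OV hB.1 _ _
      · intro y hy
        rw [r_val_eq hB hint hV hodd hr i]
        exact rho_fix _ y (hy _ hbi)
      · apply mem_PresGrp_of_le
        intro y hy
        rw [r_val_eq hB hint hV hodd hr i, rho_apply]
        exact Submodule.sub_mem _ hy (Submodule.smul_mem _ _ hbi)
  -- the approximation subgroup A'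
  set A' : Subgroup (GLV n p) :=
    { carrier := {u | u ∈ OV n p B ∧ u ∈ FixGrp L ∧ u ∈ PresGrp Vs ∧
        ∃ e ∈ E, ∀ x ∈ W, u.1 x - e.1 x ∈ L}
      one_mem' := ⟨one_mem _, one_mem _, one_mem _, 1, one_mem _, fun x _ => by
        simp [Submodule.zero_mem]⟩
      mul_mem' := by
        rintro a b ⟨haO, haL, haV, ea, heaE, ha⟩ ⟨hbO, hbL, hbV, eb, hebE, hb⟩
        refine ⟨mul_mem haO hbO, mul_mem haL hbL, mul_mem haV hbV,
          ea * eb, mul_mem heaE hebE, ?_⟩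
        intro x hx
        have hd1 : b.1 x - eb.1 x ∈ L := hb x hx
        have hebx : eb.1 x ∈ W := PresGrp_apply_mem (hE_facts hebE).2 hx
        have hd2 : a.1 (eb.1 x) - ea.1 (eb.1 x) ∈ L := ha _ hebx
        have hafix : a.1 (b.1 x - eb.1 x) = b.1 x - eb.1 x := haL _ hd1
        have hcalc : (a * b).1 x - (ea * eb).1 x
            = (a.1 (eb.1 x) - ea.1 (eb.1 x)) + (b.1 x - eb.1 x) := by
          rw [Units.val_mul, Units.val_mul, Module.End.mul_apply, Module.End.mul_apply]
          have : a.1 (b.1 x) = a.1 (eb.1 x) + (b.1 x - eb.1 x) := by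
            rw [← hafix, ← map_add]
            congr 1
            abel
          rw [this]
          abel
        rw [hcalc]
        exact Submodule.add_mem _ hd2 hd1
      inv_mem' := by
        rintro a ⟨haO, haL, haV, ea, heaE, ha⟩
        refine ⟨(OV n p B).inv_mem haO, (FixGrp L).inv_mem haL,
          (PresGrp Vs).inv_mem haV, ea⁻¹, inv_mem heaE, ?_⟩
        intro x hx
        have hu : (a⁻¹).1 x ∈ Vs :=
          PresGrp_apply_mem ((PresGrp Vs).inv_mem haV) (hWVs hx)
        rw [← hVseq] at hu
        obtain ⟨w₁, hw₁, δ, hδ, hdec⟩ := Submodule.mem_sup.mp hu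
        have haw₁ : a.1 w₁ - ea.1 w₁ ∈ L := ha w₁ hw₁
        have hx' : x = a.1 w₁ + δ := by
          have : a.1 ((a⁻¹).1 x) = x := glv_cancel a x
          rw [← hdec] at this
          rw [← this, map_add, haL δ hδ]
        have hxw : x - ea.1 w₁ ∈ L := by
          have : x - ea.1 w₁ = (a.1 w₁ - ea.1 w₁) + δ := by rw [hx']; abel
          rw [this]
          exact Submodule.add_mem _ haw₁ hδ
        have hxwW : x - ea.1 w₁ ∈ W := Submodule.sub_mem _ hx
          (PresGrp_apply_mem (hE_facts heaE).2 hw₁)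
        have hzero : x - ea.1 w₁ = 0 := by
          have : x - ea.1 w₁ ∈ W ⊓ L := ⟨hxwW, hxw⟩
          rwa [hWL, Submodule.mem_bot] at this
        have hw₁x : w₁ = (ea⁻¹).1 x := by
          have hx2 : x = ea.1 w₁ := by
            have := sub_eq_zero.mp hzero; exact this
          rw [hx2, glv_cancel']
        rw [← hw₁x, ← hdec]
        have : w₁ + δ - w₁ = δ := by abel
        rw [this]
        exact hδ }
    with hA'
  -- the generators of `closure (r '' T)` lie in `A'`
  have hTA : Subgroup.closure (r '' T) ≤ A' := by
    rw [Subgroup.closure_le]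
    rintro _ ⟨i, hi, rfl⟩
    have hbVs : basisVec n p i ∈ Vs := basisVec_mem_spanV hi
    refine ⟨?_, ?_, ?_, ?_⟩
    · rw [r_eq_reflU hB hint hV hodd hr i]; exact reflU_mem_OV hB.1 _ _
    · intro x hx
      obtain ⟨c, rfl⟩ := Submodule.mem_span_singleton.mp hx
      rw [r_val_eq hB hint hV hodd hr i, map_smul]
      congr 1
      exact rho_fix _ l (hlperp _ hbVs)
    · apply mem_PresGrp_of_le
      intro x hx
      rw [r_val_eq hB hint hV hodd hr i, rho_apply]
      exact Submodule.sub_mem _ hx (Submodule.smul_mem _ _ hbVs)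
    · rcases eq_or_ne i k with rfl | hik
      · -- the special generator
        refine ⟨s, hsE, ?_⟩
        intro x hx
        rw [r_val_eq hB hint hV hodd hr i]
        rw [rho_apply]
        show _ - (rho B w x) ∈ L
        rw [rho_apply]
        have hxl : form n p B x (basisVec n p i) = form n p B x w := by
          rw [← hsum, form_add_right, form_smul_right]
          have : form n p B x l = 0 := by
            rw [form_comm B hB.1]
            exact hlperp x (hWVs hx)
          rw [this]
          ring
        rw [hxl, hQk]
        rw [← hsum]
        have hcalc : x - (2 * form n p B x w * (form n p B w w)⁻¹) • (w + t • l)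
            - (x - (2 * form n p B x w * (form n p B w w)⁻¹) • w)
            = -((2 * form n p B x w * (form n p B w w)⁻¹) * t) • l := by
          module
        rw [hcalc]
        exact Submodule.smul_mem _ _ (Submodule.mem_span_singleton_self l)
      · -- ordinary generators
        refine ⟨r i, hDE (hgen i (hTS i hi hik)), fun x _ => by
          rw [sub_self]; exact Submodule.zero_mem _⟩
  -- hence `g` agrees with some `e ∈ E`
  obtain ⟨hgO, hgL, hgVs, e, heE, hge⟩ := hTA hgT
  have hgeW : ∀ x ∈ W, g.1 x = e.1 x := by
    intro x hx
    have h1 : g.1 x - e.1 x ∈ L := hge x hx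
    have h2 : g.1 x - e.1 x ∈ W := Submodule.sub_mem _ (hgW x hx)
      (PresGrp_apply_mem (hE_facts heE).2 hx)
    have : g.1 x - e.1 x = 0 := by
      have : g.1 x - e.1 x ∈ W ⊓ L := ⟨h2, h1⟩
      rwa [hWL, Submodule.mem_bot] at this
    exact sub_eq_zero.mp this
  have hgeperp : ∀ x ∈ perpS B W, g.1 x = e.1 x := by
    intro x hx
    rw [hgfix x hx, (hE_facts heE).1.2 x hx]
  have hsupW : W ⊔ perpS B W = ⊤ := by
    have hinf : W ⊓ perpS B W = ⊥ := by
      rw [eq_bot_iff]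
      rintro x ⟨hxW, hxP⟩
      rw [Submodule.mem_bot]
      exact hV0n1 x hxW fun y hy => hxP y hy
    have hfrP : Module.finrank (ZMod p) (perpS B W) = 2 := by
      rw [finrank_perpS hV, hW, finrank_spanV, card_mid hn]
      omega
    refine Submodule.eq_of_le_of_finrank_le le_top ?_
    have h1 := Submodule.finrank_sup_add_finrank_inf_eq W (perpS B W)
    rw [hinf, finrank_bot, hfrW, hfrP] at h1
    have h2 : Module.finrank (ZMod p) (⊤ : Submodule (ZMod p) (V n p)) = n := by
      rw [finrank_top, Module.finrank_fin_fun]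
    rw [h2]
    omega
  have hgeq : g = e := by
    apply Units.ext
    apply LinearMap.ext
    intro x
    have hx : x ∈ W ⊔ perpS B W := by rw [hsupW]; exact Submodule.mem_top
    obtain ⟨y, hy, z, hz, rfl⟩ := Submodule.mem_sup.mp hx
    rw [map_add, map_add, hgeW y hy, hgeperp z hz]
  -- E splits as D ∪ sD
  have hsD_or : ∀ e' ∈ E, e' ∈ D ∨ s * e' ∈ D := by
    have hconj : ∀ d ∈ D, s * d * s⁻¹ ∈ D := by
      intro d hd
      rw [hD] at hd ⊢
      exact conj_O1 hB.1 hsO hsW hd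
    have hss : s⁻¹ = s := rfl
    have hs2 : s * s = 1 := by rw [hs_def]; exact reflU_sq w hQw
    have hconj' : ∀ d ∈ D, s * d * s ∈ D := by
      intro d hd
      have := hconj d hd
      rwa [hss] at this
    intro e' he'
    refine Subgroup.closure_induction ?_ ?_ ?_ ?_ he'
    · rintro x (rfl | ⟨i, hi, rfl⟩)
      · right
        rw [hs_def, reflU_sq]
        exact one_mem _
      · left
        exact hgen i hi
    · left; exact one_mem _
    · rintro x y _ _ (hx | hx) (hy | hy)
      · left; exact mul_mem hx hy
      · right
        have : s * (x * y) = (s * x * s⁻¹) * (s * y) := by group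
        rw [this]
        exact mul_mem (hconj x hx) hy
      · right
        rw [← mul_assoc]
        exact mul_mem hx hy
      · left
        have h1 : (s * (s * x) * s) * (s * y) = (s * s) * x * ((s * s) * y) := by
          group
        rw [hs2, one_mul, one_mul] at h1
        rw [← h1]
        exact mul_mem (hconj' _ hx) hy
    · rintro x _ (hx | hx)
      · left; exact inv_mem hx
      · right
        have h1 : s * (s * x)⁻¹ * s = s * x⁻¹ := by group
        rw [← h1]
        exact hconj' _ (inv_mem hx)
  rcases hsD_or e heE with heD | hseD
  · rw [hgeq]; exact heD
  · -- decide by the sphere character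
    by_cases hsq : ∃ t' : ZMod p, t' ≠ 0 ∧ form n p B w w = t' ^ 2
    · -- `s` itself lies in `D`
      obtain ⟨t', ht'0, ht'⟩ := hsq
      have hsD : s ∈ D := by
        rw [hD]
        apply Subgroup.subset_closure
        exact ⟨w, hwW, ⟨t', ht'0, ht'⟩, fun x => rfl⟩
      have : g = s * (s * e) := by
        rw [← mul_assoc, hs_def, reflU_sq, one_mul, hgeq]
      rw [this]
      exact mul_mem hsD hseD
    · exfalso
      have hns : ∀ t' : ZMod p, form n p B w w ≠ t' ^ 2 := by
        intro t' h
        rcases eq_or_ne t' 0 with rfl | ht'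
        · rw [h] at hQw; simp at hQw
        · exact hsq ⟨t', ht', h⟩
      obtain ⟨u₀, hu0, hnsq⟩ := exists_nonsquare' (p := p) hodd
      have hφg : phiF B u₀ g = 1 := by
        have hgG : g ∈ Subgroup.closure (Set.range r) := by
          refine Subgroup.closure_mono ?_ hgT
          rintro _ ⟨i, _, rfl⟩
          exact Set.mem_range_self i
        rw [hGO1] at hgG
        exact (O1_prop hB.1 hodd ⊤ hu0 hnsq hgG).2
      have hφse : phiF B u₀ (s * e) = 1 := by
        rw [hD] at hseD
        exact (O1_prop hB.1 hodd _ hu0 hnsq hseD).2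
      have hφs : phiF B u₀ s = -1 :=
        phiF_nonsq_refl hB.1 hodd hns (fun x => rfl) hu0 hnsq
      have heOV : e ∈ OV n p B := (hE_facts heE).1.1
      rw [phiF_mul u₀ hsO heOV, hφs, ← hgeq, hφg] at hφse
      norm_num at hφse

end Core
/-- when `V` and `V_{0,n-1}` are nonsingular but `V₀` or `V_{n-1}` is
singular, with `G_{0,n-1}ᵖ` of orthogonal type (and `Gᵖ = O₁(V)` in case
`G_{0,n-1}ᵖ = O₁(V_{0,n-1})`), one has `G₀ᵖ ∩ G_{n-1}ᵖ = G_{0,n-1}ᵖ`. -/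
theorem statement6
    (n p : ℕ) (hn : 3 ≤ n) (hp : p.Prime) (hodd : p ≠ 2)
    (B : Matrix (Fin n) (Fin n) ℚ)
    (hB : GramOK n B) (hint : PIntegral n p B)
    (r : Fin n → GLV n p) (hr : ReflHyp n p B r)
    (hgen : Generic n p B)
    (hsq : ∃ i : Fin n, 1 ≤ (i : ℕ) ∧ (i : ℕ) ≤ n - 2 ∧
      ∃ t : ZMod p, t ≠ 0 ∧ redQ p (B i i) = t ^ 2)
    (hV : Nonsing n p B ⊤)
    (hV0n1 : Nonsing n p B (spanV n p {i : Fin n | (i : ℕ) ≠ 0 ∧ (i : ℕ) ≠ n - 1}))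
    (hsing : ¬ Nonsing n p B (spanV n p {i : Fin n | (i : ℕ) ≠ 0}) ∨ ¬ Nonsing n p B (spanV n p {i : Fin n | (i : ℕ) ≠ n - 1}))
    (h0n1 : OrthType n p B (spanV n p {i : Fin n | (i : ℕ) ≠ 0 ∧ (i : ℕ) ≠ n - 1}) (Subgroup.closure (r '' {i : Fin n | (i : ℕ) ≠ 0 ∧ (i : ℕ) ≠ n - 1})))
    (hcond : Subgroup.closure (r '' {i : Fin n | (i : ℕ) ≠ 0 ∧ (i : ℕ) ≠ n - 1}) = O1 n p B (spanV n p {i : Fin n | (i : ℕ) ≠ 0 ∧ (i : ℕ) ≠ n - 1}) →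
      Subgroup.closure (Set.range r) = O1 n p B ⊤) :
    Subgroup.closure (r '' {i : Fin n | (i : ℕ) ≠ 0}) ⊓ Subgroup.closure (r '' {i : Fin n | (i : ℕ) ≠ n - 1}) =
      Subgroup.closure (r '' {i : Fin n | (i : ℕ) ≠ 0 ∧ (i : ℕ) ≠ n - 1}) := by
  haveI : Fact p.Prime := ⟨hp⟩
  apply le_antisymm
  · intro g hg
    obtain ⟨hgA, hgC⟩ := Subgroup.mem_inf.mp hg
    obtain ⟨hgOV, hgfix, hgW⟩ := Hfacts hB hint hV hodd hr hn hgA hgC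
    rcases h0n1 with hOSub | hO1 | hO2
    · -- full orthogonal type
      rw [hOSub]
      refine ⟨hgOV, mem_PresGrp.mp (mem_PresGrp_of_le hgW), ?_⟩
      intro u hu
      exact hgfix u hu
    · -- O₁ type: use the core lemma on the singular side
      rcases hsing with h0 | h1
      · simp only [Nonsing] at h0
        push_neg at h0
        obtain ⟨l, hlU, hlrad, hl0⟩ := h0
        have hlast : n - 1 < n := by omega
        refine core hB hint hV hodd hr hn hV0n1 {i : Fin n | (i : ℕ) ≠ 0}
          ⟨n - 1, hlast⟩ ?_ ?_ (fun i hi => hi.1) (card_ne0 hn) hl0 hlU hlrad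
          hO1 (hcond hO1) hgA hgW hgfix
        · show (n - 1 : ℕ) ≠ 0
          omega
        · rintro i hi hik
          refine ⟨hi, ?_⟩
          intro hv
          exact hik (Fin.ext (by simpa using hv))
      · simp only [Nonsing] at h1
        push_neg at h1
        obtain ⟨l, hlU, hlrad, hl0⟩ := h1
        have h0n : 0 < n := by omega
        refine core hB hint hV hodd hr hn hV0n1 {i : Fin n | (i : ℕ) ≠ n - 1}
          ⟨0, h0n⟩ ?_ ?_ (fun i hi => hi.2) (card_nelast hn) hl0 hlU hlrad
          hO1 (hcond hO1) hgC hgW hgfix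
        · show (0 : ℕ) ≠ n - 1
          omega
        · rintro i hi hik
          refine ⟨?_, hi⟩
          intro hv
          exact hik (Fin.ext (by simpa using hv))
    · -- O₂ type is impossible thanks to the square node label
      exfalso
      obtain ⟨i, h1i, h2i, t, ht0, htsq⟩ := hsq
      have hiS : i ∈ {i : Fin n | (i : ℕ) ≠ 0 ∧ (i : ℕ) ≠ n - 1} := by
        refine ⟨by omega, by omega⟩
      have hriD : r i ∈ Subgroup.closure
          (r '' {i : Fin n | (i : ℕ) ≠ 0 ∧ (i : ℕ) ≠ n - 1}) :=
        Subgroup.subset_closure (Set.mem_image_of_mem _ hiS)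
      rw [hO2] at hriD
      have hv1 := (O2_prop hB.1 hodd _ hriD).2
      have hv2 : phiF B (1 : ZMod p) (r i) = -1 :=
        phiF_one_sq_refl hB.1 hodd ht0 (by rw [form_basis]; exact htsq)
          (fun x => by rw [r_val_eq hB hint hV hodd hr i]; rfl)
      rw [hv2] at hv1
      norm_num at hv1
  · exact le_inf (Subgroup.closure_mono (Set.image_mono fun i hi => hi.1))
      (Subgroup.closure_mono (Set.image_mono fun i hi => hi.2))

end Statement6
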